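/- In the matrix ring T₁ = [[Z, pZ],[Z, Z]] (2×2 matrices with integer entries whose top-right entry is divisible by the prime p), the subset M = [[pZ, pZ],[Z, Z]] is a two-sided ideal satisfying M² = M (M is idempotent). -/
import Mathlib


open Matrix in
/-- In the HNP ring `T₁ = [[ℤ, pℤ], [ℤ, ℤ]]` (2×2 integer matrices whose top-right
entry is divisible by the prime `p`), the subset `M = [[pℤ, pℤ], [ℤ, ℤ]]` is a
two-sided ideal with `M² = M` (where `M²` is the usual ideal product, the additive
span of pairwise products). -/
theorem stmt_15 (p : ℕ) (hp : p.Prime) :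
    -- `T₁` and `M` as subsets of the ring of 2×2 integer matrices:
    ∀ T M : Set (Matrix (Fin 2) (Fin 2) ℤ),
      T = {A | (p : ℤ) ∣ A 0 1} →
      M = {A | (p : ℤ) ∣ A 0 0 ∧ (p : ℤ) ∣ A 0 1} →
      -- `M` is a two-sided ideal of `T₁`:
      (M ⊆ T ∧ (0 : Matrix (Fin 2) (Fin 2) ℤ) ∈ M ∧
        (∀ A ∈ M, ∀ B ∈ M, A + B ∈ M) ∧ (∀ A ∈ M, -A ∈ M) ∧
        (∀ A ∈ T, ∀ B ∈ M, A * B ∈ M ∧ B * A ∈ M)) ∧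
      -- `M` is idempotent: `M² = M`
      {C | ∃ (n : ℕ) (f g : Fin n → Matrix (Fin 2) (Fin 2) ℤ),
          (∀ i, f i ∈ M) ∧ (∀ i, g i ∈ M) ∧ C = ∑ i, f i * g i} = M := by
  intro T M hT hM
  subst hT hM
  constructor
  · refine ⟨fun A hA => hA.2, ⟨⟨0, rfl⟩, ⟨0, rfl⟩⟩, ?_, ?_, ?_⟩
    · rintro A ⟨hA1, hA2⟩ B ⟨hB1, hB2⟩
      exact ⟨by simpa using dvd_add hA1 hB1, by simpa using dvd_add hA2 hB2⟩
    · rintro A ⟨hA1, hA2⟩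
      exact ⟨by simpa using hA1.neg_right, by simpa using hA2.neg_right⟩
    · rintro A hA B ⟨hB1, hB2⟩
      refine ⟨⟨?_, ?_⟩, ⟨?_, ?_⟩⟩ <;>
        simp only [Matrix.mul_apply, Fin.sum_univ_two] <;>
        [exact dvd_add (dvd_mul_of_dvd_right hB1 _) (dvd_mul_of_dvd_left hA _);
         exact dvd_add (dvd_mul_of_dvd_right hB2 _) (dvd_mul_of_dvd_left hA _);
         exact dvd_add (dvd_mul_of_dvd_left hB1 _) (dvd_mul_of_dvd_left hB2 _);
         exact dvd_add (dvd_mul_of_dvd_left hB1 _) (dvd_mul_of_dvd_left hB2 _)]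
  · ext C
    constructor
    · rintro ⟨n, f, g, hf, hg, rfl⟩
      constructor <;>
      · rw [show (∑ i, f i * g i) = ∑ i, f i * g i from rfl]
        simp only [Matrix.sum_apply]
        refine Finset.dvd_sum fun i _ => ?_
        simp only [Matrix.mul_apply, Fin.sum_univ_two]
        exact dvd_add (dvd_mul_of_dvd_left (hf i).1 _) (dvd_mul_of_dvd_left (hf i).2 _)
    · rintro ⟨⟨a, ha⟩, ⟨b, hb⟩⟩
      refine ⟨2, ![!![0, (p : ℤ); 0, 0], !![0, 0; 0, 1]],
        ![!![0, 0; a, b], !![0, 0; C 1 0, C 1 1]], ?_, ?_, ?_⟩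
      · intro i; fin_cases i <;> refine ⟨?_, ?_⟩ <;> simp
      · intro i; fin_cases i <;> refine ⟨?_, ?_⟩ <;> simp
      · ext i j
        fin_cases i <;> fin_cases j <;>
          simp [Fin.sum_univ_two, Matrix.mul_apply, ha, hb] <;> ring
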